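/- Let G = (V,E) be a connected finite simple graph with n = |V|, let k be the largest cardinality of an independent set of G, and let 𝒢 be the graph obtained from G by the subdivision-path-apex construction. Then every proper skew stalled subset 𝒮 of 𝒢 has cardinality at most (2n+1)·|E| + k. -/

import Mathlib

/-- An empty vertex `v` is forced by the filled set `F` if some filled vertex `u ∈ F`
adjacent to `v` has `v` as its unique neighbor outside `F`. -/
def IsForced {W : Type*} (H : SimpleGraph W) (F : Set W) (v : W) : Prop :=
  v ∉ F ∧ ∃ u, u ∈ F ∧ H.Adj u v ∧ ∀ w, H.Adj u w → w ∉ F → w = v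

/-- An empty vertex `v` is skew forced by `F` if some vertex `u` (filled or not)
adjacent to `v` has `v` as its unique neighbor outside `F`. -/
def IsSkewForced {W : Type*} (H : SimpleGraph W) (F : Set W) (v : W) : Prop :=
  v ∉ F ∧ ∃ u, H.Adj u v ∧ ∀ w, H.Adj u w → w ∉ F → w = v

/-- `F` is stalled if no empty vertex is forced by `F`. -/
def Stalled {W : Type*} (H : SimpleGraph W) (F : Set W) : Prop :=
  ∀ v, ¬ IsForced H F v

/-- `F` is skew stalled if no empty vertex is skew forced by `F`. -/
def SkewStalled {W : Type*} (H : SimpleGraph W) (F : Set W) : Prop :=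
  ∀ v, ¬ IsSkewForced H F v

/-- A set of vertices is independent if its vertices are pairwise non-adjacent. -/
def IndepIn {W : Type*} (H : SimpleGraph W) (U : Set W) : Prop :=
  U.Pairwise fun a b => ¬ H.Adj a b

/-- Vertex set of the subdivision-path-apex construction: the vertices of `G`,
vertices `e^i` for each edge `e` and `0 ≤ i ≤ 2n`, and one apex vertex `ε`. -/
abbrev GVert {V : Type*} [Fintype V] (G : SimpleGraph V) : Type _ :=
  V ⊕ (G.edgeSet × Fin (2 * Fintype.card V + 1)) ⊕ Unit

/-- Generating relation: `v ~ e^0` when `v ∈ e`; `e^i ~ e^{i+1}`; `ε ~ e^0`. -/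
def gRel {V : Type*} [Fintype V] (G : SimpleGraph V) : GVert G → GVert G → Prop
  | Sum.inl v, Sum.inr (Sum.inl (e, i)) => i.val = 0 ∧ v ∈ (e : Sym2 V)
  | Sum.inr (Sum.inl (e, i)), Sum.inr (Sum.inl (e', j)) => e = e' ∧ i.val + 1 = j.val
  | Sum.inr (Sum.inr _), Sum.inr (Sum.inl (_, i)) => i.val = 0
  | _, _ => False

/-- The subdivision-path-apex construction `𝒢`. -/
def GG {V : Type*} [Fintype V] (G : SimpleGraph V) : SimpleGraph (GVert G) :=
  SimpleGraph.fromRel (gRel G)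

namespace Aux
variable {V : Type*} [Fintype V] {G : SimpleGraph V}

def pv (G : SimpleGraph V) (e : G.edgeSet) (i : Fin (2 * Fintype.card V + 1)) : GVert G :=
  Sum.inr (Sum.inl (e, i))

def eps (G : SimpleGraph V) : GVert G := Sum.inr (Sum.inr ())

@[simp] lemma pv_inj {e e' : G.edgeSet} {i j} : pv G e i = pv G e' j ↔ e = e' ∧ i = j := by
  simp [pv]

@[simp] lemma pv_ne_inl {e : G.edgeSet} {i} {v : V} : pv G e i ≠ Sum.inl v := by simp [pv]
@[simp] lemma inl_ne_pv {e : G.edgeSet} {i} {v : V} : Sum.inl v ≠ pv G e i := by simp [pv]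
@[simp] lemma pv_ne_eps {e : G.edgeSet} {i} : pv G e i ≠ eps G := by simp [pv, eps]
@[simp] lemma eps_ne_pv {e : G.edgeSet} {i} : eps G ≠ pv G e i := by simp [pv, eps]
@[simp] lemma inl_ne_eps {v : V} : (Sum.inl v : GVert G) ≠ eps G := by simp [eps]
@[simp] lemma eps_ne_inl {v : V} : eps G ≠ (Sum.inl v : GVert G) := by simp [eps]

lemma pv_cast {e : G.edgeSet} {a b : ℕ} (h : a = b) (ha : a < 2 * Fintype.card V + 1)
    (hb : b < 2 * Fintype.card V + 1) : pv G e ⟨a, ha⟩ = pv G e ⟨b, hb⟩ := by subst h; rfl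

lemma adj_vp {v : V} {e i} : (GG G).Adj (Sum.inl v) (pv G e i) ↔ (i : ℕ) = 0 ∧ v ∈ (e : Sym2 V) := by
  simp only [GG, SimpleGraph.fromRel_adj, gRel, pv]
  constructor
  · rintro ⟨-, (h | h)⟩ <;> first | exact h | exact h.elim
  · intro h; exact ⟨by simp, Or.inl h⟩

lemma adj_pp {e e' : G.edgeSet} {i j} :
    (GG G).Adj (pv G e i) (pv G e' j) ↔ e = e' ∧ ((i : ℕ) + 1 = (j : ℕ) ∨ (j : ℕ) + 1 = (i : ℕ)) := by
  simp only [GG, SimpleGraph.fromRel_adj, gRel, pv]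
  constructor
  · rintro ⟨-, (⟨rfl, h⟩ | ⟨rfl, h⟩)⟩
    · exact ⟨rfl, Or.inl h⟩
    · exact ⟨rfl, Or.inr h⟩
  · rintro ⟨rfl, (h | h)⟩
    · refine ⟨?_, Or.inl ⟨rfl, h⟩⟩
      simp only [ne_eq, Sum.inr.injEq, Sum.inl.injEq, Prod.mk.injEq, not_and]
      intro _ hij; rw [Fin.ext_iff] at hij; omega
    · refine ⟨?_, Or.inr ⟨rfl, h⟩⟩
      simp only [ne_eq, Sum.inr.injEq, Sum.inl.injEq, Prod.mk.injEq, not_and]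
      intro _ hij; rw [Fin.ext_iff] at hij; omega

lemma adj_ep {e : G.edgeSet} {i} : (GG G).Adj (eps G) (pv G e i) ↔ (i : ℕ) = 0 := by
  simp only [GG, SimpleGraph.fromRel_adj, gRel, pv, eps]
  constructor
  · rintro ⟨-, (h | h)⟩ <;> first | exact h | exact h.elim
  · intro h; exact ⟨by simp, Or.inl h⟩

@[simp] lemma not_adj_vv {v w : V} : ¬ (GG G).Adj (Sum.inl v) (Sum.inl w) := by
  rintro ⟨-, (h | h)⟩ <;> exact h

@[simp] lemma not_adj_ve {v : V} : ¬ (GG G).Adj (Sum.inl v) (eps G) := by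
  rintro ⟨-, (h | h)⟩ <;> exact h

@[simp] lemma not_adj_ee : ¬ (GG G).Adj (eps G) (eps G) := by
  rintro ⟨-, (h | h)⟩ <;> exact h

lemma adj_p_iff (w : GVert G) (e : G.edgeSet) (i : Fin (2 * Fintype.card V + 1)) :
    (GG G).Adj w (pv G e i) ↔
      ((i : ℕ) = 0 ∧ ((∃ v, w = Sum.inl v ∧ v ∈ (e : Sym2 V)) ∨ w = eps G)) ∨
      ∃ j, w = pv G e j ∧ ((i : ℕ) + 1 = (j : ℕ) ∨ (j : ℕ) + 1 = (i : ℕ)) := by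
  obtain (v | ⟨⟨e', j⟩ | ⟨⟩⟩) := w
  · rw [adj_vp]
    constructor
    · rintro ⟨h0, hv⟩; exact Or.inl ⟨h0, Or.inl ⟨v, rfl, hv⟩⟩
    · rintro (⟨h0, (⟨v', hv', hm⟩ | habs)⟩ | ⟨j, habs, -⟩)
      · cases hv'; exact ⟨h0, hm⟩
      · exact absurd habs inl_ne_eps
      · exact absurd habs inl_ne_pv
  · show (GG G).Adj (pv G e' j) (pv G e i) ↔ _
    rw [adj_pp]
    constructor
    · rintro ⟨rfl, (h | h)⟩
      · exact Or.inr ⟨j, rfl, Or.inr h⟩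
      · exact Or.inr ⟨j, rfl, Or.inl h⟩
    · rintro (⟨h0, (⟨v', habs, -⟩ | habs)⟩ | ⟨j', hj', (h | h)⟩)
      · exact absurd habs pv_ne_inl
      · exact absurd habs pv_ne_eps
      · obtain ⟨rfl, rfl⟩ := pv_inj.mp hj'; exact ⟨rfl, Or.inr h⟩
      · obtain ⟨rfl, rfl⟩ := pv_inj.mp hj'; exact ⟨rfl, Or.inl h⟩
  · show (GG G).Adj (eps G) (pv G e i) ↔ _
    rw [adj_ep]
    constructor
    · intro h0; exact Or.inl ⟨h0, Or.inr rfl⟩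
    · rintro (⟨h0, -⟩ | ⟨j, habs, -⟩)
      · exact h0
      · exact absurd habs eps_ne_pv

variable {S : Set (GVert G)}

lemma stall' (hS : SkewStalled (GG G) S) {v u : GVert G} (hv : v ∉ S) (h : (GG G).Adj u v) :
    ∃ w, (GG G).Adj u w ∧ w ∉ S ∧ w ≠ v := by
  by_contra hc
  push_neg at hc
  exact hS v ⟨hv, u, h, fun w hw hws => hc w hw hws⟩

lemma step_up (hS : SkewStalled (GG G) S) {e : G.edgeSet} {m : ℕ}
    (hm : m + 2 ≤ 2 * Fintype.card V)
    (h : pv G e ⟨m, by omega⟩ ∉ S) : pv G e ⟨m + 2, by omega⟩ ∉ S := by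
  have hadj : (GG G).Adj (pv G e ⟨m + 1, by omega⟩) (pv G e ⟨m, by omega⟩) :=
    adj_pp.mpr ⟨rfl, Or.inr rfl⟩
  obtain ⟨w, hw, hws, hne⟩ := stall' hS h hadj
  rcases (adj_p_iff w e ⟨m + 1, by omega⟩).mp hw.symm with ⟨h0, -⟩ | ⟨j, rfl, hj | hj⟩
  · simp at h0
  · have : j = ⟨m + 2, by omega⟩ := Fin.ext (by simpa using hj.symm)
    rwa [this] at hws
  · have : j = ⟨m, by omega⟩ := Fin.ext (by simp at hj ⊢; omega)
    rw [this] at hne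
    exact absurd rfl hne

lemma step_down (hS : SkewStalled (GG G) S) {e : G.edgeSet} {m : ℕ}
    (hm : m + 2 ≤ 2 * Fintype.card V)
    (h : pv G e ⟨m + 2, by omega⟩ ∉ S) : pv G e ⟨m, by omega⟩ ∉ S := by
  have hadj : (GG G).Adj (pv G e ⟨m + 1, by omega⟩) (pv G e ⟨m + 2, by omega⟩) :=
    adj_pp.mpr ⟨rfl, Or.inl rfl⟩
  obtain ⟨w, hw, hws, hne⟩ := stall' hS h hadj
  rcases (adj_p_iff w e ⟨m + 1, by omega⟩).mp hw.symm with ⟨h0, -⟩ | ⟨j, rfl, hj | hj⟩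
  · simp at h0
  · have : j = ⟨m + 2, by omega⟩ := Fin.ext (by simpa using hj.symm)
    rw [this] at hne
    exact absurd rfl hne
  · have : j = ⟨m, by omega⟩ := Fin.ext (by simp at hj ⊢; omega)
    rwa [this] at hws

lemma up_all (hS : SkewStalled (GG G) S) {e : G.edgeSet} :
    ∀ t m (hm : m + 2 * t ≤ 2 * Fintype.card V),
      pv G e ⟨m, by omega⟩ ∉ S → pv G e ⟨m + 2 * t, by omega⟩ ∉ S := by
  intro t
  induction t with
  | zero => intro m hm h; rwa [pv_cast (show m + 2 * 0 = m by omega)]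
  | succ t ih =>
    intro m hm h
    have h1 := step_up hS (m := m + 2 * t) (by omega) (ih m (by omega) h)
    rwa [pv_cast (show m + 2 * (t + 1) = m + 2 * t + 2 by omega)]

lemma down_all (hS : SkewStalled (GG G) S) {e : G.edgeSet} :
    ∀ t m (hm : m + 2 * t ≤ 2 * Fintype.card V),
      pv G e ⟨m + 2 * t, by omega⟩ ∉ S → pv G e ⟨m, by omega⟩ ∉ S := by
  intro t
  induction t with
  | zero => intro m hm h; rwa [pv_cast (show m + 2 * 0 = m by omega)] at h
  | succ t ih =>
    intro m hm h
    refine ih m (by omega) (step_down hS (m := m + 2 * t) (by omega) ?_)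
    rwa [pv_cast (show m + 2 * (t + 1) = m + 2 * t + 2 by omega)] at h

lemma top_filled (hS : SkewStalled (GG G) S) (hn : 1 ≤ Fintype.card V) {e : G.edgeSet} :
    pv G e ⟨2 * Fintype.card V - 1, by omega⟩ ∈ S := by
  by_contra h
  have hadj : (GG G).Adj (pv G e ⟨2 * Fintype.card V, by omega⟩)
      (pv G e ⟨2 * Fintype.card V - 1, by omega⟩) :=
    adj_pp.mpr ⟨rfl, Or.inr (by simp; omega)⟩
  obtain ⟨w, hw, hws, hne⟩ := stall' hS h hadj
  rcases (adj_p_iff w e ⟨2 * Fintype.card V, by omega⟩).mp hw.symm with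
    ⟨h0, -⟩ | ⟨j, rfl, hj | hj⟩
  · simp at h0; omega
  · have := j.isLt; simp at hj; omega
  · have : j = ⟨2 * Fintype.card V - 1, by omega⟩ := Fin.ext (by simp at hj ⊢; omega)
    rw [this] at hne
    exact absurd rfl hne

lemma odd_filled (hS : SkewStalled (GG G) S) (hn : 1 ≤ Fintype.card V) {e : G.edgeSet}
    {i : Fin (2 * Fintype.card V + 1)} (hi : (i : ℕ) % 2 = 1) : pv G e i ∈ S := by
  by_contra h
  have hlt := i.isLt
  obtain ⟨t, ht⟩ : ∃ t, (i : ℕ) + 2 * t = 2 * Fintype.card V - 1 := ⟨(2 * Fintype.card V - 1 - i) / 2, by omega⟩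
  have h2 := up_all hS t (i : ℕ) (by omega) h
  rw [pv_cast ht (hb := by omega)] at h2
  exact h2 (top_filled hS hn)

lemma reach (hS : SkewStalled (GG G) S) {e : G.edgeSet} {a b : ℕ}
    (ha : a ≤ 2 * Fintype.card V) (hb : b ≤ 2 * Fintype.card V) (hab : a % 2 = b % 2)
    (h : pv G e ⟨a, by omega⟩ ∉ S) : pv G e ⟨b, by omega⟩ ∉ S := by
  obtain ⟨t, ht | ht⟩ : ∃ t, b = a + 2 * t ∨ a = b + 2 * t := ⟨(max a b - min a b) / 2, by omega⟩
  · have := up_all hS t a (by omega) h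
    rwa [pv_cast ht.symm] at this
  · exact down_all hS t b (by omega) (by rwa [pv_cast ht.symm])

lemma indep_of_eps_empty (hS : SkewStalled (GG G) S) (hn : 1 ≤ Fintype.card V)
    (heps : eps G ∉ S) : IndepIn G {v : V | Sum.inl v ∈ S} := by
  intro u hu v hv hne hadj
  set e : G.edgeSet := ⟨s(u, v), hadj⟩ with he
  have hadj0 : (GG G).Adj (pv G e ⟨0, by omega⟩) (eps G) := (adj_ep.mpr rfl).symm
  obtain ⟨w, hw, hws, hwne⟩ := stall' hS heps hadj0
  rcases (adj_p_iff w e ⟨0, by omega⟩).mp hw.symm with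
    ⟨-, ⟨x, rfl, hx⟩ | rfl⟩ | ⟨j, rfl, hj | hj⟩
  · have hx' : x ∈ s(u, v) := hx
    rcases Sym2.mem_iff.mp hx' with rfl | rfl
    · exact hws hu
    · exact hws hv
  · exact hwne rfl
  · have : j = ⟨1, by omega⟩ := Fin.ext (by simp at hj ⊢; omega)
    rw [this] at hws
    exact hws (odd_filled hS hn (i := ⟨1, by omega⟩) rfl)
  · simp at hj

lemma spread (hS : SkewStalled (GG G) S) (hn : 1 ≤ Fintype.card V) (heps : eps G ∈ S)
    {u v : V} (hadj : G.Adj u v) (hu : Sum.inl u ∉ S) : Sum.inl v ∉ S := by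
  set e : G.edgeSet := ⟨s(u, v), hadj⟩ with he
  have hadj0 : (GG G).Adj (pv G e ⟨0, by omega⟩) (Sum.inl u) :=
    (adj_vp.mpr ⟨rfl, Sym2.mem_mk_left u v⟩).symm
  obtain ⟨w, hw, hws, hwne⟩ := stall' hS hu hadj0
  rcases (adj_p_iff w e ⟨0, by omega⟩).mp hw.symm with
    ⟨-, ⟨x, rfl, hx⟩ | rfl⟩ | ⟨j, rfl, hj | hj⟩
  · have hx' : x ∈ s(u, v) := hx
    rcases Sym2.mem_iff.mp hx' with rfl | rfl
    · exact absurd rfl hwne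
    · exact hws
  · exact absurd heps hws
  · have : j = ⟨1, by omega⟩ := Fin.ext (by simp at hj ⊢; omega)
    rw [this] at hws
    exact absurd (odd_filled hS hn (i := ⟨1, by omega⟩) rfl) hws
  · simp at hj

lemma walk_spread (hS : SkewStalled (GG G) S) (hn : 1 ≤ Fintype.card V) (heps : eps G ∈ S) :
    ∀ {u v : V} (_ : G.Walk u v), Sum.inl u ∉ S → Sum.inl v ∉ S := by
  intro u v p
  induction p with
  | nil => exact id
  | cons h q ih => intro hu; exact ih (spread hS hn heps h hu)

lemma card_gvert : Nat.card (GVert G)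
    = Fintype.card V + (2 * Fintype.card V + 1) * G.edgeSet.ncard + 1 := by
  rw [Nat.card_sum, Nat.card_sum, Nat.card_prod]
  simp [Nat.card_eq_fintype_card, Nat.card_coe_set_eq]
  ring

end Aux

open Aux in
theorem skewStalled_card_le {V : Type*} [Fintype V] (G : SimpleGraph V)
    (hG : G.Connected) (k : ℕ)
    (hk : IsGreatest {m | ∃ U : Set V, IndepIn G U ∧ U.ncard = m} k)
    (S : Set (GVert G)) (hS : SkewStalled (GG G) S) (hproper : S ≠ Set.univ) :
    S.ncard ≤ (2 * Fintype.card V + 1) * G.edgeSet.ncard + k := by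
  classical
  have hn : 1 ≤ Fintype.card V := Fintype.card_pos_iff.mpr hG.nonempty
  have hk1 : 1 ≤ k := by
    obtain ⟨v⟩ := hG.nonempty
    exact hk.2 ⟨{v}, Set.pairwise_singleton v _, Set.ncard_singleton v⟩
  have hcard : S.ncard + Sᶜ.ncard = Nat.card (GVert G) := Set.ncard_add_ncard_compl S
  rw [card_gvert] at hcard
  suffices hmain : Fintype.card V + 1 ≤ k + Sᶜ.ncard by omega
  by_cases heps : eps G ∈ S
  · by_cases hall : ∀ v : V, Sum.inl v ∈ S
    · -- everything in V and ε filled: some path vertex empty, whole even class empty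
      obtain ⟨x, hx⟩ := (Set.ne_univ_iff_exists_notMem S).mp hproper
      obtain (v | ⟨⟨e, i⟩ | ⟨⟩⟩) := x
      · exact absurd (hall v) hx
      · have hx' : pv G e i ∉ S := hx
        have hieven : (i : ℕ) % 2 = 0 := by
          rcases Nat.mod_two_eq_zero_or_one (i : ℕ) with h | h
          · exact h
          · exact absurd (odd_filled hS hn h) hx'
        have hilt := i.isLt
        set f : Fin (Fintype.card V + 1) → GVert G :=
          fun j => pv G e ⟨2 * (j : ℕ), by have := j.isLt; omega⟩ with hf
        have hinj : Function.Injective f := by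
          intro a b hab
          simp only [hf, pv_inj, Fin.mk.injEq, true_and] at hab
          exact Fin.ext (by omega)
        have hsub : f '' Set.univ ⊆ Sᶜ := by
          rintro _ ⟨j, -, rfl⟩
          have := j.isLt
          exact reach hS (a := (i : ℕ)) (by omega) (by omega) (by omega) hx'
        have hle : Fintype.card V + 1 ≤ Sᶜ.ncard := by
          have h1 := Set.ncard_le_ncard hsub (Set.toFinite _)
          rwa [Set.ncard_image_of_injective _ hinj, Set.ncard_univ, Nat.card_eq_fintype_card,
            Fintype.card_fin] at h1
        omega
      · exact absurd heps hx
    · push_neg at hall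
      obtain ⟨u, hu⟩ := hall
      have hallnot : ∀ v : V, Sum.inl v ∉ S := by
        intro v
        obtain ⟨p⟩ := hG.preconnected u v
        exact walk_spread hS hn heps p hu
      have hsub : (Sum.inl '' (Set.univ : Set V)) ⊆ Sᶜ := by
        rintro _ ⟨v, -, rfl⟩; exact hallnot v
      have hle : Fintype.card V ≤ Sᶜ.ncard := by
        have h1 := Set.ncard_le_ncard hsub (Set.toFinite _)
        rwa [Set.ncard_image_of_injective _ Sum.inl_injective, Set.ncard_univ,
          Nat.card_eq_fintype_card] at h1
      omega
  · set A : Set V := {v : V | Sum.inl v ∈ S} with hA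
    have hind : IndepIn G A := indep_of_eps_empty hS hn heps
    have hAk : A.ncard ≤ k := hk.2 ⟨A, hind, rfl⟩
    have hAc : A.ncard + Aᶜ.ncard = Fintype.card V := by
      rw [Set.ncard_add_ncard_compl, Nat.card_eq_fintype_card]
    have hsub : (Sum.inl '' Aᶜ ∪ {eps G}) ⊆ Sᶜ := by
      rintro _ (⟨v, hv, rfl⟩ | rfl)
      · exact hv
      · exact heps
    have hdis : Disjoint (Sum.inl '' Aᶜ) ({eps G} : Set (GVert G)) := by
      simp only [Set.disjoint_singleton_right]
      rintro ⟨v, -, habs⟩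
      exact inl_ne_eps habs
    have hle : Aᶜ.ncard + 1 ≤ Sᶜ.ncard := by
      have h1 := Set.ncard_le_ncard hsub (Set.toFinite _)
      rwa [Set.ncard_union_eq hdis, Set.ncard_image_of_injective _ Sum.inl_injective,
        Set.ncard_singleton] at h1
    omega
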